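/- Let V be a partial isometry on a complex Hilbert space H, and on K = H × H let ε_V be the selfadjoint operator ε_V(ξ,η) = (Vη, V*ξ). Let 𝐀 ∈ B(K) be a diagonal selfadjoint operator, i.e. 𝐀(ξ,η) = (A₁ξ, A₂η) with A₁, A₂ ∈ B(H) selfadjoint. Suppose 𝐗 ∈ B(K) is selfadjoint, commutes with ε_V, and satisfies ‖𝐀 + 𝐗‖ ≤ ‖𝐀 + 𝐘‖ for every selfadjoint 𝐘 ∈ B(K) commuting with ε_V. Let P ∈ B(K) be the orthogonal projection onto H × {0}, and set 𝐗₀ = P𝐗P + (1−P)𝐗(1−P). Then 𝐗₀ is selfadjoint, 𝐗₀ commutes with ε_V, and ‖𝐀 + 𝐗₀‖ ≤ ‖𝐀 + 𝐙‖ for every diagonal selfadjoint 𝐙 ∈ B(K) (𝐙(ξ,η) = (Z₁ξ, Z₂η) with Z₁, Z₂ selfadjoint) satisfying Z₁V = VZ₂. -/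

import Mathlib

variable {H : Type*} [NormedAddCommGroup H] [InnerProductSpace ℂ H] [CompleteSpace H]

local notation "K" => WithLp 2 (H × H)

/-- The identification of the pair `(ξ, η)` with an element of the Hilbert space
`K = H × H` carrying the sum inner product (`WithLp 2 (H × H)`). -/
noncomputable def toK {H : Type*} [NormedAddCommGroup H] [InnerProductSpace ℂ H] (x : H × H) :
    WithLp 2 (H × H) := (WithLp.equiv 2 (H × H)).symm x

set_option linter.unusedSectionVars false
set_option maxHeartbeats 1000000

lemma toK_surj (x : WithLp 2 (H × H)) : toK (x.fst, x.snd) = x := rfl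

lemma toK_sub (a b c d : H) : toK (a, b) - toK (c, d) = toK (a - c, b - d) := rfl

lemma inner_toK (a b c d : H) :
    (inner ℂ (toK (a, b)) (toK (c, d)) : ℂ) = inner ℂ a c + inner ℂ b d := rfl

lemma ext_toK (S T : K →L[ℂ] K) (h : ∀ ξ η : H, S (toK (ξ, η)) = T (toK (ξ, η))) : S = T := by
  ext x
  have := h x.fst x.snd
  rwa [toK_surj] at this

lemma sa_of_sym (S : K →L[ℂ] K)
    (h : ∀ a b c d : H, (inner ℂ (S (toK (a, b))) (toK (c, d)) : ℂ)
        = inner ℂ (toK (a, b)) (S (toK (c, d)))) : IsSelfAdjoint S := by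
  rw [ContinuousLinearMap.isSelfAdjoint_iff_isSymmetric]
  intro x y
  have := h x.fst x.snd y.fst y.snd
  rwa [toK_surj, toK_surj] at this

/-- Let `V` be a partial isometry on `H`, `ε = ε_V` the selfadjoint
operator on `K = H × H` given by `ε(ξ,η) = (Vη, V*ξ)`, `A` a diagonal selfadjoint
operator on `K`, and `X` a selfadjoint operator commuting with `ε` which minimizes
`‖A + ·‖` among all selfadjoint operators commuting with `ε`.  If `P` is the orthogonal
projection onto `H × {0}` and `X₀ = PXP + (1−P)X(1−P)`, then `X₀` is selfadjoint,
commutes with `ε`, and `‖A + X₀‖ ≤ ‖A + Z‖` for every diagonal selfadjoint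
`Z = Z₁ ⊕ Z₂` with `Z₁V = VZ₂`. -/
theorem diagonal_minimal_lifting
    (V : H →L[ℂ] H) (hV : V * star V * V = V)
    (ε A X P : K →L[ℂ] K)
    (hε : ∀ ξ η : H, ε (toK (ξ, η)) = toK (V η, star V ξ))
    (A₁ A₂ : H →L[ℂ] H) (hA₁ : IsSelfAdjoint A₁) (hA₂ : IsSelfAdjoint A₂)
    (hA : ∀ ξ η : H, A (toK (ξ, η)) = toK (A₁ ξ, A₂ η))
    (hX : IsSelfAdjoint X) (hXcomm : X * ε = ε * X)
    (hXmin : ∀ Y : K →L[ℂ] K, IsSelfAdjoint Y → Y * ε = ε * Y → ‖A + X‖ ≤ ‖A + Y‖)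
    (hP : ∀ ξ η : H, P (toK (ξ, η)) = toK (ξ, 0)) :
    IsSelfAdjoint (P * X * P + (1 - P) * X * (1 - P)) ∧
    (P * X * P + (1 - P) * X * (1 - P)) * ε = ε * (P * X * P + (1 - P) * X * (1 - P)) ∧
    ∀ (Z : K →L[ℂ] K) (Z₁ Z₂ : H →L[ℂ] H), IsSelfAdjoint Z₁ → IsSelfAdjoint Z₂ →
      (∀ ξ η : H, Z (toK (ξ, η)) = toK (Z₁ ξ, Z₂ η)) → Z₁ * V = V * Z₂ →
      ‖A + (P * X * P + (1 - P) * X * (1 - P))‖ ≤ ‖A + Z‖ := by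
  -- basic facts about P
  have hPsa : IsSelfAdjoint P := by
    apply sa_of_sym
    intro a b c d
    rw [hP, hP, inner_toK, inner_toK]
    simp
  have hP2 : P * P = P := by
    apply ext_toK
    intro ξ η
    rw [ContinuousLinearMap.mul_apply, hP, hP]
  have h1Psa : IsSelfAdjoint (1 - P) := by
    unfold IsSelfAdjoint; erw [star_sub, star_one, hPsa.star_eq]
  have h1P2 : (1 - P) * (1 - P) = 1 - P := by
    rw [sub_mul, mul_sub, mul_sub, one_mul, mul_one, hP2]; abel
  -- commutation of ε with P
  have r1 : P * ε = ε * (1 - P) := by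
    apply ext_toK
    intro ξ η
    rw [ContinuousLinearMap.mul_apply, ContinuousLinearMap.mul_apply, hε, hP,
      ContinuousLinearMap.sub_apply, ContinuousLinearMap.one_apply, hP, toK_sub,
      sub_self, sub_zero, hε]
    simp
  have r2 : (1 - P) * ε = ε * P := by
    apply ext_toK
    intro ξ η
    rw [ContinuousLinearMap.mul_apply, ContinuousLinearMap.sub_apply,
      ContinuousLinearMap.one_apply, ContinuousLinearMap.mul_apply, hP, hε, hP, hε, toK_sub,
      sub_self, sub_zero]
    simp
  refine ⟨?_, ?_, ?_⟩
  · -- selfadjoint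
    have := hX.star_eq
    have := hPsa.star_eq
    have := h1Psa.star_eq
    have sadd : ∀ a b : K →L[ℂ] K, star (a + b) = star a + star b := fun a b => star_add a b
    have smul' : ∀ a b : K →L[ℂ] K, star (a * b) = star b * star a := fun a b => star_mul a b
    simp only [IsSelfAdjoint, sadd, smul', hX.star_eq, hPsa.star_eq, h1Psa.star_eq,
      mul_assoc]
  · -- commutes with ε
    have h1 : P * X * P * ε = ε * ((1 - P) * X * (1 - P)) := by
      calc P * X * P * ε = P * X * (P * ε) := by noncomm_ring
        _ = P * X * (ε * (1 - P)) := by rw [r1]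
        _ = P * (X * ε) * (1 - P) := by noncomm_ring
        _ = P * (ε * X) * (1 - P) := by rw [hXcomm]
        _ = (P * ε) * X * (1 - P) := by noncomm_ring
        _ = (ε * (1 - P)) * X * (1 - P) := by rw [r1]
        _ = ε * ((1 - P) * X * (1 - P)) := by noncomm_ring
    have h2 : (1 - P) * X * (1 - P) * ε = ε * (P * X * P) := by
      calc (1 - P) * X * (1 - P) * ε = (1 - P) * X * ((1 - P) * ε) := by noncomm_ring
        _ = (1 - P) * X * (ε * P) := by rw [r2]
        _ = (1 - P) * (X * ε) * P := by noncomm_ring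
        _ = (1 - P) * (ε * X) * P := by rw [hXcomm]
        _ = ((1 - P) * ε) * X * P := by noncomm_ring
        _ = (ε * P) * X * P := by rw [r2]
        _ = ε * (P * X * P) := by noncomm_ring
    rw [add_mul, h1, h2, mul_add, add_comm]
  · -- minimality
    intro Z Z₁ Z₂ hZ₁ hZ₂ hZ hZV
    -- Z is selfadjoint
    have hZsa : IsSelfAdjoint Z := by
      apply sa_of_sym
      intro a b c d
      rw [hZ, hZ, inner_toK, inner_toK]
      exact congrArg₂ (· + ·)
        ((ContinuousLinearMap.isSelfAdjoint_iff_isSymmetric.mp hZ₁) a c)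
        ((ContinuousLinearMap.isSelfAdjoint_iff_isSymmetric.mp hZ₂) b d)
    -- Z commutes with ε
    have hZV' : Z₂ * star V = star V * Z₁ := by
      have h := congrArg star hZV
      rw [star_mul, star_mul, hZ₁.star_eq, hZ₂.star_eq] at h
      exact h.symm
    have hZcomm : Z * ε = ε * Z := by
      apply ext_toK
      intro ξ η
      rw [ContinuousLinearMap.mul_apply, ContinuousLinearMap.mul_apply, hε, hZ, hZ, hε]
      have e1 : Z₁ (V η) = V (Z₂ η) := by
        have := congrFun (congrArg DFunLike.coe hZV) η
        simpa using this
      have e2 : Z₂ (star V ξ) = star V (Z₁ ξ) := by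
        have := congrFun (congrArg DFunLike.coe hZV') ξ
        simpa using this
      rw [e1, e2]
    have hmin := hXmin Z hZsa hZcomm
    -- A commutes with P
    have hAP : A * P = P * A := by
      apply ext_toK
      intro ξ η
      rw [ContinuousLinearMap.mul_apply, ContinuousLinearMap.mul_apply, hP, hA, hA, hP,
        map_zero]
    have e1 : P * A * P = A * P := by rw [← hAP, mul_assoc, hP2]
    have hAP' : A * (1 - P) = (1 - P) * A := by
      rw [mul_sub, sub_mul, mul_one, one_mul, hAP]
    have e2 : (1 - P) * A * (1 - P) = A * (1 - P) := by rw [← hAP', mul_assoc, h1P2]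
    have hA' : P * A * P + (1 - P) * A * (1 - P) = A := by
      rw [e1, e2, mul_sub, mul_one]; abel
    have key1 : A + (P * X * P + (1 - P) * X * (1 - P))
        = P * (A + X) * P + (1 - P) * (A + X) * (1 - P) := by
      conv_lhs => rw [← hA']
      noncomm_ring
    -- the pinching norm estimate via U = 1 - P - P
    set U : K →L[ℂ] K := 1 - P - P with hU
    have hU2 : U * U = 1 := by
      rw [hU, sub_mul, sub_mul, one_mul, mul_sub, mul_sub, mul_one, hP2]; abel
    have hUsa : IsSelfAdjoint U := by
      rw [hU]; unfold IsSelfAdjoint; erw [star_sub, star_sub, star_one, hPsa.star_eq]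
    have hUnorm : ∀ x : WithLp 2 (H × H), ‖U x‖ = ‖x‖ := by
      intro x
      have hi : (inner ℂ (U x) (U x) : ℂ) = inner ℂ x x := by
        calc (inner ℂ (U x) (U x) : ℂ)
            = inner ℂ x ((ContinuousLinearMap.adjoint U) (U x)) :=
              (ContinuousLinearMap.adjoint_inner_right U x (U x)).symm
          _ = inner ℂ x ((U * U) x) := by
              rw [← ContinuousLinearMap.star_eq_adjoint, hUsa.star_eq,
                ContinuousLinearMap.mul_apply]
          _ = inner ℂ x x := by rw [hU2, ContinuousLinearMap.one_apply]
      have h2 : ‖U x‖ ^ 2 = ‖x‖ ^ 2 := by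
        have h3 := congrArg (fun z : ℂ => RCLike.re z) hi
        rwa [inner_self_eq_norm_sq, inner_self_eq_norm_sq] at h3
      nlinarith [norm_nonneg (U x), norm_nonneg x]
    have hUle : ‖U‖ ≤ 1 :=
      ContinuousLinearMap.opNorm_le_bound _ zero_le_one fun x => by rw [hUnorm, one_mul]
    have hUTU : ‖U * (A + X) * U‖ ≤ ‖A + X‖ := by
      calc ‖U * (A + X) * U‖ ≤ ‖U * (A + X)‖ * ‖U‖ := norm_mul_le _ _
        _ ≤ (‖U‖ * ‖A + X‖) * ‖U‖ := by
            gcongr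
            exact norm_mul_le _ _
        _ ≤ (1 * ‖A + X‖) * 1 := by
            gcongr <;> first | exact hUle | positivity
        _ = ‖A + X‖ := by ring
    have hDD : (A + (P * X * P + (1 - P) * X * (1 - P)))
        + (A + (P * X * P + (1 - P) * X * (1 - P)))
        = (A + X) + U * (A + X) * U := by
      rw [key1, hU]
      simp only [mul_add, add_mul, mul_sub, sub_mul, one_mul, mul_one, mul_assoc]
      abel
    have h2norm : 2 * ‖A + (P * X * P + (1 - P) * X * (1 - P))‖
        = ‖(A + X) + U * (A + X) * U‖ := by
      rw [← hDD, ← two_smul ℂ (A + (P * X * P + (1 - P) * X * (1 - P))), norm_smul,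
        Complex.norm_ofNat]
    have hfinal : 2 * ‖A + (P * X * P + (1 - P) * X * (1 - P))‖ ≤ 2 * ‖A + X‖ := by
      rw [h2norm]
      calc ‖(A + X) + U * (A + X) * U‖ ≤ ‖A + X‖ + ‖U * (A + X) * U‖ := norm_add_le _ _
        _ ≤ ‖A + X‖ + ‖A + X‖ := by linarith
        _ = 2 * ‖A + X‖ := by ring
    linarith
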